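/- Let (V,E) be a finite digraph, μ₁, μ₂ probability measures on V, and Q an acyclic flow on (V,E) with div Q = μ₁ − μ₂. Set V₋ = {x : μ₁(x) > μ₂(x)} and V₊ = {x : μ₂(x) > μ₁(x)}. Then Q admits a finite decomposition Q = ∑_n q_n Q_{γ_n} (finite self-avoiding directed paths γ_n, weights q_n ≥ 0) such that for every subset S ⊆ V, ∑_{n : γ_n ⊆ S} q_n ≤ min{ ∑_{x ∈ S∩V₋}(μ₁(x) − μ₂(x)), ∑_{x ∈ S∩V₊}(μ₂(x) − μ₁(x)) }, and moreover ∑_n q_n = (1/2) ∑_{x∈V} |μ₁(x) − μ₂(x)|. -/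

import Mathlib

open scoped BigOperators

variable {V : Type*}

/-- A directed path in the digraph `(V, E)`: a nonempty list of vertices whose
consecutive pairs are directed edges. -/
def IsDipath (E : Set (V × V)) (l : List V) : Prop :=
  l ≠ [] ∧ l.Chain' (fun a b => (a, b) ∈ E)

/-- The list of directed edges of a path. -/
def pathEdges (l : List V) : List (V × V) := l.zip l.tail

/-- The unit flow `Q_γ` along a path: `1` on the edges of the path and `0` elsewhere. -/
noncomputable def pathFlow (l : List V) : V × V → ℝ :=
  Set.indicator {e | e ∈ pathEdges l} 1

/-- A flow on the digraph `(V, E)`: nonnegative and supported on `E`. -/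
def IsFlow (E : Set (V × V)) (Q : V × V → ℝ) : Prop :=
  (∀ e, 0 ≤ Q e) ∧ ∀ e, e ∉ E → Q e = 0

/-- The divergence of a flow at a vertex. -/
noncomputable def divergence (Q : V × V → ℝ) (x : V) : ℝ :=
  (∑' y, Q (x, y)) - ∑' y, Q (y, x)

/-- A relation is acyclic if it has no directed cycles. -/
def AcyclicRel (r : V → V → Prop) : Prop := ∀ x, ¬ Relation.TransGen r x x

/-- The edge relation of a digraph. -/
def edgeRel (E : Set (V × V)) : V → V → Prop := fun a b => (a, b) ∈ E

/-- The partial order induced by an acyclic digraph: `x ≤ y` iff `x = y` or there is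
a directed path from `x` to `y`. -/
def inducedLE (E : Set (V × V)) : V → V → Prop :=
  Relation.ReflTransGen (edgeRel E)

/-- A finitely decomposable flow: a pointwise sum `∑ₙ qₙ Q_{γₙ}` over finite
self-avoiding directed paths with summable nonnegative weights. -/
def FinDecomposable (E : Set (V × V)) (Q : V × V → ℝ) : Prop :=
  ∃ (γ : ℕ → List V) (q : ℕ → ℝ),
    (∀ n, IsDipath E (γ n)) ∧ (∀ n, (γ n).Nodup) ∧ (∀ n, 0 ≤ q n) ∧ Summable q ∧
    ∀ e, Q e = ∑' n, q n * pathFlow (γ n) e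

/-- A probability measure on a countable set, as a nonnegative function of total sum `1`. -/
def IsProb (μ : V → ℝ) : Prop := (∀ x, 0 ≤ μ x) ∧ HasSum μ 1

/-- A coupling of `μ₁` and `μ₂`: a probability on `V × V` with the given marginals. -/
def IsCoupling (μ₁ μ₂ : V → ℝ) (ρ : V × V → ℝ) : Prop :=
  (∀ p, 0 ≤ ρ p) ∧ (∀ x, HasSum (fun y => ρ (x, y)) (μ₁ x)) ∧
    ∀ y, HasSum (fun x => ρ (x, y)) (μ₂ y)

/-- Stochastic domination: `∑ f μ₁ ≤ ∑ f μ₂` for every bounded increasing `f`. -/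
def StochDom (le : V → V → Prop) (μ₁ μ₂ : V → ℝ) : Prop :=
  ∀ f : V → ℝ, (∃ C, ∀ x, |f x| ≤ C) → (∀ x y, le x y → f x ≤ f y) →
    ∑' x, f x * μ₁ x ≤ ∑' x, f x * μ₂ x

/-- Finite-case divergence. -/
noncomputable def divergenceF [Fintype V] (Q : V × V → ℝ) (x : V) : ℝ :=
  (∑ y, Q (x, y)) - ∑ y, Q (y, x)

/-- Probability measure on a finite set. -/
def IsProbF [Fintype V] (μ : V → ℝ) : Prop := (∀ x, 0 ≤ μ x) ∧ ∑ x, μ x = 1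

/-- Coupling on a finite set. -/
def IsCouplingF [Fintype V] (μ₁ μ₂ : V → ℝ) (ρ : V × V → ℝ) : Prop :=
  (∀ p, 0 ≤ ρ p) ∧ (∀ x, ∑ y, ρ (x, y) = μ₁ x) ∧ ∀ y, ∑ x, ρ (x, y) = μ₂ y

/-- Stochastic domination on a finite set. -/
def StochDomF [Fintype V] (le : V → V → Prop) (μ₁ μ₂ : V → ℝ) : Prop :=
  ∀ f : V → ℝ, (∀ x y, le x y → f x ≤ f y) → ∑ x, f x * μ₁ x ≤ ∑ x, f x * μ₂ x

/-- The cost of a path: the sum of the weights of its edges. -/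
noncomputable def pathCost (w : V × V → ℝ) (l : List V) : ℝ := ((pathEdges l).map w).sum

/-- The geodesic cost associated to a weight function on a digraph. -/
noncomputable def geoCost (E : Set (V × V)) (w : V × V → ℝ) (x y : V) : ℝ :=
  sInf {r | ∃ l, IsDipath E l ∧ l.head? = some x ∧ l.getLast? = some y ∧ pathCost w l = r}



section AuxDecomp
variable {V : Type*}

lemma reflTransGen_getLast {r : V → V → Prop} :
    ∀ (l : List V) (a : V), List.Chain r a l → ∀ y, (a :: l).getLast? = some y →
      Relation.ReflTransGen r a y := by
  intro l
  induction l with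
  | nil => intro a _ y hy; simp at hy; subst hy; exact Relation.ReflTransGen.refl
  | cons b t ih =>
      intro a hc y hy
      replace hc := List.isChain_cons_cons.1 hc
      have h2 : (b :: t).getLast? = some y := by
        rw [← hy]; exact List.getLast?_cons_cons.symm
      exact Relation.ReflTransGen.head hc.1 (ih b hc.2 y h2)

lemma chain'_reflTransGen_getLast {r : V → V → Prop} :
    ∀ (l : List V), l.Chain' r → ∀ z ∈ l, ∀ y, l.getLast? = some y →
      Relation.ReflTransGen r z y := by
  intro l
  induction l with
  | nil => intro _ z hz; simp at hz
  | cons a t ih =>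
      intro hc z hz y hy
      rcases List.mem_cons.1 hz with rfl | hz
      · exact reflTransGen_getLast t z ((List.isChain_cons.1 hc).2 |> fun _ => hc) y hy
      · have ht : t ≠ [] := by rintro rfl; simp at hz
        refine ih hc.tail z hz y ?_
        rcases t with _ | ⟨b, t'⟩
        · exact absurd rfl ht
        · rw [← hy]; exact List.getLast?_cons_cons.symm

lemma exists_maximal_chain [Fintype V] {r : V → V → Prop} (hacyc : AcyclicRel r) (x : V) :
    ∃ l : List V, l ≠ [] ∧ l.head? = some x ∧ l.Nodup ∧ l.Chain' r ∧
      ∀ y, l.getLast? = some y → ∀ z, ¬ r y z := by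
  suffices h : ∀ (n : ℕ) (l : List V), l ≠ [] → l.Nodup → l.Chain' r →
      Fintype.card V ≤ l.length + n →
      ∃ l' : List V, l' ≠ [] ∧ l'.head? = l.head? ∧ l'.Nodup ∧ l'.Chain' r ∧
        ∀ y, l'.getLast? = some y → ∀ z, ¬ r y z by
    obtain ⟨l', h1, h2, h3, h4, h5⟩ := h (Fintype.card V) [x] (by simp) (by simp) (List.isChain_singleton x)
      (by simp)
    exact ⟨l', h1, by simpa using h2, h3, h4, h5⟩
  intro n
  induction n with
  | zero =>
      intro l hne hnd hch hlen
      by_cases hsink : ∀ y, l.getLast? = some y → ∀ z, ¬ r y z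
      · exact ⟨l, hne, rfl, hnd, hch, hsink⟩
      · exfalso
        push_neg at hsink
        obtain ⟨y, hy, z, hrz⟩ := hsink
        have hznl : z ∉ l := by
          intro hzl
          exact hacyc z (Relation.TransGen.tail'
            (chain'_reflTransGen_getLast l hch z hzl y hy) hrz)
        have hnd' : (l ++ [z]).Nodup := by
          simp [List.nodup_append, hnd, hznl]
          exact fun a ha h => hznl (h ▸ ha)
        have := hnd'.length_le_card
        simp at this
        omega
  | succ n ih =>
      intro l hne hnd hch hlen
      by_cases hsink : ∀ y, l.getLast? = some y → ∀ z, ¬ r y z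
      · exact ⟨l, hne, rfl, hnd, hch, hsink⟩
      · push_neg at hsink
        obtain ⟨y, hy, z, hrz⟩ := hsink
        have hznl : z ∉ l := by
          intro hzl
          exact hacyc z (Relation.TransGen.tail'
            (chain'_reflTransGen_getLast l hch z hzl y hy) hrz)
        have hnd' : (l ++ [z]).Nodup := by
          simp [List.nodup_append, hnd, hznl]
          exact fun a ha h => hznl (h ▸ ha)
        have hch' : (l ++ [z]).Chain' r := by
          refine List.IsChain.append hch (List.isChain_singleton z) ?_
          intro a ha b hb
          simp at hb
          subst hb
          rw [hy] at ha
          simp at ha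
          subst ha
          exact hrz
        obtain ⟨l', h1, h2, h3, h4, h5⟩ := ih (l ++ [z]) (by simp) hnd' hch'
          (by simp; omega)
        refine ⟨l', h1, ?_, h3, h4, h5⟩
        rw [h2]
        rcases l with _ | ⟨a, t⟩
        · exact absurd rfl hne
        · simp

lemma divergenceF_add [Fintype V] (Q P : V × V → ℝ) (x : V) :
    divergenceF (fun e => Q e + P e) x = divergenceF Q x + divergenceF P x := by
  simp [divergenceF, Finset.sum_add_distrib]; ring

lemma divergenceF_sub_smul [Fintype V] (Q P : V × V → ℝ) (c : ℝ) (x : V) :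
    divergenceF (fun e => Q e - c * P e) x = divergenceF Q x - c * divergenceF P x := by
  simp [divergenceF, Finset.sum_sub_distrib, ← Finset.mul_sum]; ring

open Classical in
lemma pathFlow_apply (l : List V) (e : V × V) :
    pathFlow l e = if e ∈ pathEdges l then (1 : ℝ) else 0 := by
  simp [pathFlow, Set.indicator_apply]

lemma pathFlow_nonneg (l : List V) (e : V × V) : 0 ≤ pathFlow l e := by
  classical
  rw [pathFlow_apply]; split <;> norm_num

lemma mem_pathEdges_fst {l : List V} {e : V × V} (he : e ∈ pathEdges l) :
    e.1 ∈ l ∧ e.2 ∈ l := by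
  have := List.of_mem_zip (l₁ := l) (l₂ := l.tail) (by exact he)
  exact ⟨this.1, List.mem_of_mem_tail this.2⟩

lemma pathEdges_cons_cons (a b : V) (t : List V) :
    pathEdges (a :: b :: t) = (a, b) :: pathEdges (b :: t) := by
  simp [pathEdges]

open Classical in
lemma divergenceF_single [Fintype V] (a b : V) (x : V) :
    divergenceF (fun e => if e = (a, b) then (1 : ℝ) else 0) x
      = (if a = x then 1 else 0) - (if b = x then 1 else 0) := by
  classical
  simp only [divergenceF, Prod.mk.injEq, Prod.ext_iff]
  congr 1
  · rcases eq_or_ne a x with rfl | h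
    · simp
    · simp [Ne.symm h, h]
  · rcases eq_or_ne b x with rfl | h
    · simp
    · simp [Ne.symm h, h]

open Classical in
lemma divergenceF_pathFlow [Fintype V] :
    ∀ (l : List V), l.Nodup → ∀ x,
      divergenceF (pathFlow l) x
        = (if l.head? = some x then 1 else 0) - (if l.getLast? = some x then 1 else 0) := by
  intro l
  induction l with
  | nil => intro _ x; simp [divergenceF, pathFlow_apply, pathEdges]
  | cons a t ih =>
      rcases t with _ | ⟨b, t'⟩
      · intro _ x
        simp only [divergenceF]
        simp [pathFlow_apply, pathEdges]
      · intro hnd x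
        have ha : a ∉ b :: t' := (List.nodup_cons.1 hnd).1
        have hpf : ∀ e, pathFlow (a :: b :: t') e
            = (if e = (a, b) then (1 : ℝ) else 0) + pathFlow (b :: t') e := by
          intro e
          rw [pathFlow_apply, pathFlow_apply, pathEdges_cons_cons]
          rcases eq_or_ne e (a, b) with rfl | hne
          · have : (a, b) ∉ pathEdges (b :: t') := fun h => ha (mem_pathEdges_fst h).1
            simp [this]
          · simp [hne, List.mem_cons]
        have : divergenceF (pathFlow (a :: b :: t')) x
            = divergenceF (fun e => if e = (a, b) then (1 : ℝ) else 0) x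
              + divergenceF (pathFlow (b :: t')) x := by
          rw [← divergenceF_add]
          simp only [divergenceF]
          congr 1 <;> apply Finset.sum_congr rfl <;> intro y _ <;> rw [hpf]
        rw [this, divergenceF_single, ih (List.nodup_cons.1 hnd).2]
        have hlast : (a :: b :: t').getLast? = (b :: t').getLast? := List.getLast?_cons_cons
        rw [hlast]
        simp only [List.head?_cons, Option.some.injEq]
        ring

lemma chain'_pathEdges {r : V → V → Prop} :
    ∀ (l : List V), l.Chain' r → ∀ e ∈ pathEdges l, r e.1 e.2 := by
  intro l
  induction l with
  | nil => intro _ e he; simp [pathEdges] at he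
  | cons a t ih =>
      rcases t with _ | ⟨b, t'⟩
      · intro _ e he; simp [pathEdges] at he
      · intro hc e he
        rw [pathEdges_cons_cons] at he
        rcases List.mem_cons.1 he with rfl | he
        · exact (List.isChain_cons_cons.1 hc).1
        · exact ih (List.isChain_cons_cons.1 hc).2 e he

lemma sum_divergenceF [Fintype V] (Q : V × V → ℝ) : ∑ x, divergenceF Q x = 0 := by
  unfold divergenceF
  rw [Finset.sum_sub_distrib, sub_eq_zero]
  exact Finset.sum_comm

open Classical in
lemma decomp [Fintype V] (E : Set (V × V)) :
    ∀ (N : ℕ) (Q : V × V → ℝ),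
      ((Finset.univ.filter (fun e : V × V => 0 < Q e)).card
        + (Finset.univ.filter (fun x : V => divergenceF Q x ≠ 0)).card) < N →
      IsFlow E Q → AcyclicRel (fun a b => 0 < Q (a, b)) →
      ∃ L : List (List V × ℝ),
        (∀ p ∈ L, IsDipath E p.1 ∧ p.1.Nodup ∧ 0 ≤ p.2) ∧
        (∀ e, Q e = (L.map (fun p => p.2 * pathFlow p.1 e)).sum) ∧
        (∀ x, (L.map (fun p => if p.1.head? = some x then p.2 else 0)).sum
            = max (divergenceF Q x) 0) ∧
        (∀ x, (L.map (fun p => if p.1.getLast? = some x then p.2 else 0)).sum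
            = max (-divergenceF Q x) 0) := by
  intro N
  induction N with
  | zero => intro Q h; omega
  | succ N ih =>
      intro Q hm hQ hacyc
      by_cases hpos : ∃ x, 0 < divergenceF Q x
      · obtain ⟨x, hx⟩ := hpos
        obtain ⟨l, hne, hhead, hnd, hch, hsink⟩ := exists_maximal_chain hacyc x
        obtain ⟨y, hy⟩ : ∃ y, l.getLast? = some y := by
          rcases l with _ | ⟨a, t⟩
          · exact absurd rfl hne
          · exact ⟨_, List.getLast?_cons⟩
        have hmemx : x ∈ l := by
          rcases l with _ | ⟨a, t⟩
          · exact absurd rfl hne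
          · simp at hhead; subst hhead; exact List.mem_cons_self
        have hout_y : ∑ z, Q (y, z) = 0 :=
          Finset.sum_eq_zero fun z _ => le_antisymm (not_lt.1 (hsink y hy z)) (hQ.1 _)
        have hin_nonneg : (0:ℝ) ≤ ∑ z, Q (z, y) :=
          Finset.sum_nonneg fun z _ => hQ.1 _
        have hyx : y ≠ x := by
          rintro rfl
          rw [divergenceF, hout_y] at hx
          linarith
        have hdivy : divergenceF Q y < 0 := by
          have hby : Relation.ReflTransGen (fun a b => 0 < Q (a, b)) x y :=
            chain'_reflTransGen_getLast l hch x hmemx y hy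
          obtain ⟨w, _, hwy⟩ := (Relation.reflTransGen_iff_eq_or_transGen.1 hby).resolve_left
            hyx |> fun h => Relation.TransGen.tail'_iff.1 h
          have hin : 0 < ∑ z, Q (z, y) :=
            lt_of_lt_of_le hwy (Finset.single_le_sum (fun i _ => hQ.1 (i, y))
              (Finset.mem_univ w))
          rw [divergenceF, hout_y]
          linarith
        have hEnon : ((pathEdges l).toFinset : Finset (V × V)).Nonempty := by
          rcases l with _ | ⟨a, t⟩
          · exact absurd rfl hne
          rcases t with _ | ⟨b, t'⟩
          · exfalso
            simp at hhead hy
            exact hyx (hy.symm.trans hhead)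
          · exact ⟨(a, b), List.mem_toFinset.2 (by
              rw [pathEdges_cons_cons]; exact List.mem_cons_self)⟩
        obtain ⟨e₀, he₀, hmin⟩ := Finset.exists_min_image _ Q hEnon
        have he₀' : e₀ ∈ pathEdges l := List.mem_toFinset.1 he₀
        have hQe₀ : 0 < Q e₀ := by
          have := chain'_pathEdges l hch e₀ he₀'
          simpa using this
        set q := min (Q e₀) (min (divergenceF Q x) (-divergenceF Q y)) with hqdef
        have hq0 : 0 < q := lt_min hQe₀ (lt_min hx (by linarith))
        have hq1 : q ≤ Q e₀ := min_le_left _ _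
        have hq2 : q ≤ divergenceF Q x := le_trans (min_le_right _ _) (min_le_left _ _)
        have hq3 : q ≤ -divergenceF Q y := le_trans (min_le_right _ _) (min_le_right _ _)
        set Q' := fun e => Q e - q * pathFlow l e with hQ'def
        have hle : ∀ e, Q' e ≤ Q e := fun e => by
          have := mul_nonneg hq0.le (pathFlow_nonneg l e)
          simp only [Q']; linarith
        have hQ'nonneg : ∀ e, 0 ≤ Q' e := by
          intro e
          simp only [Q', pathFlow_apply]
          by_cases he : e ∈ pathEdges l
          · have := hmin e (List.mem_toFinset.2 he)
            simp [he]; linarith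
          · simp [he, hQ.1 e]
        have hEQ' : ∀ a b, 0 < Q' (a, b) → (a, b) ∈ E := by
          intro a b h
          by_contra hE
          have := hQ.2 _ hE
          have := hle (a, b)
          linarith
        have hQ'flow : IsFlow E Q' := by
          refine ⟨hQ'nonneg, fun e heE => ?_⟩
          have h1 := hQ.2 e heE
          have h2 : pathFlow l e = 0 := by
            rw [pathFlow_apply]
            by_cases he : e ∈ pathEdges l
            · exfalso
              have := chain'_pathEdges l hch e he
              obtain ⟨a, b⟩ := e
              simp at this
              linarith
            · simp [he]
          simp only [Q', h1, h2]; ring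
        have hsub : ∀ a b, 0 < Q' (a, b) → 0 < Q (a, b) :=
          fun a b h => lt_of_lt_of_le h (hle (a, b))
        have hacyc' : AcyclicRel (fun a b => 0 < Q' (a, b)) := fun z hz =>
          hacyc z (Relation.TransGen.mono hsub _ _ hz)
        have hdivQ' : ∀ z, divergenceF Q' z
            = divergenceF Q z - q * ((if z = x then 1 else 0) - (if z = y then 1 else 0)) := by
          intro z
          rw [show divergenceF Q' z
              = divergenceF Q z - q * divergenceF (pathFlow l) z from
            divergenceF_sub_smul Q (pathFlow l) q z]
          rw [divergenceF_pathFlow l hnd, hhead, hy]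
          simp [eq_comm]
        have hEsub : Finset.filter (fun e : V × V => 0 < Q' e) Finset.univ
            ⊆ Finset.filter (fun e : V × V => 0 < Q e) Finset.univ := by
          intro e he
          simp only [Finset.mem_filter, Finset.mem_univ, true_and] at he ⊢
          exact lt_of_lt_of_le he (hle e)
        have hVsub : Finset.filter (fun z : V => divergenceF Q' z ≠ 0) Finset.univ
            ⊆ Finset.filter (fun z : V => divergenceF Q z ≠ 0) Finset.univ := by
          intro z hz
          simp only [Finset.mem_filter, Finset.mem_univ, true_and] at hz ⊢
          intro h0
          apply hz
          have hzx : z ≠ x := by rintro rfl; rw [h0] at hx; exact lt_irrefl 0 hx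
          have hzy : z ≠ y := by rintro rfl; rw [h0] at hdivy; exact lt_irrefl 0 hdivy
          rw [hdivQ' z, h0, if_neg hzx, if_neg hzy]; ring
        have hmeas : (Finset.univ.filter (fun e : V × V => 0 < Q' e)).card
            + (Finset.univ.filter (fun z : V => divergenceF Q' z ≠ 0)).card < N := by
          have hcmp : q = Q e₀ ∨ q = divergenceF Q x ∨ q = -divergenceF Q y := by
            rcases min_choice (Q e₀) (min (divergenceF Q x) (-divergenceF Q y)) with h | h
            · exact Or.inl h
            · rcases min_choice (divergenceF Q x) (-divergenceF Q y) with h' | h'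
              · exact Or.inr (Or.inl (h.trans h'))
              · exact Or.inr (Or.inr (h.trans h'))
          rcases hcmp with hc | hc | hc
          · have hzero : Q' e₀ = 0 := by
              simp only [Q', pathFlow_apply, if_pos he₀']
              rw [hc]; ring
            have hss : Finset.filter (fun e : V × V => 0 < Q' e) Finset.univ
                ⊂ Finset.filter (fun e : V × V => 0 < Q e) Finset.univ := by
              refine ⟨hEsub, fun hcon => ?_⟩
              have := hcon (Finset.mem_filter.2 ⟨Finset.mem_univ _, hQe₀⟩)
              rw [Finset.mem_filter] at this
              rw [hzero] at this
              exact lt_irrefl 0 this.2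
            have := Finset.card_lt_card hss
            have := Finset.card_le_card hVsub
            omega
          · have hzero : divergenceF Q' x = 0 := by
              rw [hdivQ' x, if_pos rfl, if_neg (Ne.symm hyx), ← hc]; ring
            have hss : Finset.filter (fun z : V => divergenceF Q' z ≠ 0) Finset.univ
                ⊂ Finset.filter (fun z : V => divergenceF Q z ≠ 0) Finset.univ := by
              refine ⟨hVsub, fun hcon => ?_⟩
              have := hcon (Finset.mem_filter.2 ⟨Finset.mem_univ _, hx.ne'⟩)
              rw [Finset.mem_filter] at this
              exact this.2 hzero
            have := Finset.card_lt_card hss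
            have := Finset.card_le_card hEsub
            omega
          · have hzero : divergenceF Q' y = 0 := by
              rw [hdivQ' y, if_pos rfl, if_neg hyx, hc]; ring
            have hss : Finset.filter (fun z : V => divergenceF Q' z ≠ 0) Finset.univ
                ⊂ Finset.filter (fun z : V => divergenceF Q z ≠ 0) Finset.univ := by
              refine ⟨hVsub, fun hcon => ?_⟩
              have := hcon (Finset.mem_filter.2 ⟨Finset.mem_univ _, hdivy.ne⟩)
              rw [Finset.mem_filter] at this
              exact this.2 hzero
            have := Finset.card_lt_card hss
            have := Finset.card_le_card hEsub
            omega
        obtain ⟨L', hL'props, hL'sum, hL'head, hL'last⟩ := ih Q' hmeas hQ'flow hacyc'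
        refine ⟨(l, q) :: L', ?_, ?_, ?_, ?_⟩
        · intro p hp
          rcases List.mem_cons.1 hp with rfl | hp
          · refine ⟨⟨hne, hch.imp fun a b hr => ?_⟩, hnd, hq0.le⟩
            by_contra hE
            exact absurd (hQ.2 _ hE) (hr : 0 < Q (a, b)).ne'
          · exact hL'props p hp
        · intro e
          simp only [List.map_cons, List.sum_cons, ← hL'sum e]
          simp only [Q']; ring
        · intro z
          simp only [List.map_cons, List.sum_cons, hL'head z, hdivQ' z, hhead,
            Option.some.injEq]
          rcases eq_or_ne z x with rfl | hzx
          · rw [if_pos rfl, if_pos rfl, if_neg hyx.symm]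
            rw [max_eq_left (by linarith), max_eq_left hx.le]
            ring
          · rw [if_neg (fun h => hzx h.symm), if_neg hzx]
            rcases eq_or_ne z y with rfl | hzy
            · rw [if_pos rfl]
              rw [max_eq_right (by linarith), max_eq_right hdivy.le]
              ring
            · rw [if_neg hzy]; ring_nf
        · intro z
          simp only [List.map_cons, List.sum_cons, hL'last z, hdivQ' z, hy,
            Option.some.injEq]
          rcases eq_or_ne z y with rfl | hzy
          · rw [if_pos rfl, if_pos rfl, if_neg hyx]
            rw [max_eq_left (by linarith), max_eq_left (by linarith)]
            ring
          · rw [if_neg (fun h => hzy h.symm), if_neg hzy]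
            rcases eq_or_ne z x with rfl | hzx
            · rw [if_pos rfl]
              rw [max_eq_right (by linarith), max_eq_right (by linarith)]
              ring
            · rw [if_neg hzx]; ring_nf
      · -- no positive divergence: divergence vanishes and Q = 0
        push_neg at hpos
        have hdiv0 : ∀ z, divergenceF Q z = 0 := by
          intro z
          have := sum_divergenceF Q
          have h' := Finset.sum_eq_zero_iff_of_nonpos
            (fun i (_ : i ∈ Finset.univ) => hpos i) |>.1 this
          exact h' z (Finset.mem_univ z)
        have hQ0 : ∀ e, Q e = 0 := by
          intro e
          by_contra h0
          have hpe : 0 < Q e := lt_of_le_of_ne (hQ.1 e) (Ne.symm h0)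
          obtain ⟨a, b⟩ := e
          obtain ⟨l, hne, hhead, hnd, hch, hsink⟩ :=
            exists_maximal_chain (r := fun a b => 0 < Q (a, b)) hacyc b
          obtain ⟨y, hy⟩ : ∃ y, l.getLast? = some y := by
            rcases l with _ | ⟨c, t⟩
            · exact absurd rfl hne
            · exact ⟨_, List.getLast?_cons⟩
          have hout : ∑ z, Q (y, z) = 0 :=
            Finset.sum_eq_zero fun z _ => le_antisymm (not_lt.1 (hsink y hy z)) (hQ.1 _)
          have hin : 0 < ∑ z, Q (z, y) := by
            rcases eq_or_ne y b with rfl | hyb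
            · exact lt_of_lt_of_le hpe (Finset.single_le_sum (fun i _ => hQ.1 (i, y))
                (Finset.mem_univ a))
            · have hby : Relation.ReflTransGen (fun a b => 0 < Q (a, b)) b y :=
                chain'_reflTransGen_getLast l hch b (by
                  rcases l with _ | ⟨c, t⟩
                  · exact absurd rfl hne
                  · simp at hhead; subst hhead; exact List.mem_cons_self) y hy
              obtain ⟨w, _, hwy⟩ := (Relation.reflTransGen_iff_eq_or_transGen.1 hby).resolve_left
                hyb |> fun h => Relation.TransGen.tail'_iff.1 h
              exact lt_of_lt_of_le hwy (Finset.single_le_sum (fun i _ => hQ.1 (i, y))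
                (Finset.mem_univ w))
          have : divergenceF Q y < 0 := by
            rw [divergenceF, hout]; linarith
          rw [hdiv0 y] at this; exact lt_irrefl 0 this
        refine ⟨[], by simp, fun e => by simp [hQ0], fun z => by simp [hdiv0], fun z => by
          simp [hdiv0]⟩

lemma list_sum_getD {α : Type*} (f : α → ℝ) (d : α) :
    ∀ L : List α, (L.map f).sum = ∑ i ∈ Finset.range L.length, f (L.getD i d) := by
  intro L
  induction L with
  | nil => simp
  | cons a t ih =>
      rw [List.map_cons, List.sum_cons, List.length_cons, Finset.sum_range_succ', ih]
      simp [List.getD]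
      ring


end AuxDecomp

/-- **Well-balanced decomposition of finite acyclic flows.**
Any acyclic flow `Q` on a finite digraph with `div Q = μ₁ - μ₂` admits a decomposition
`Q = ∑ₙ qₙ Q_{γₙ}` whose mass inside any set `S` is bounded by the positive and negative
parts of `μ₁ - μ₂` inside `S`, and with total mass `½ ∑ₓ |μ₁(x) - μ₂(x)|`. -/
theorem acyclic_flow_balanced_decomposition {V : Type*} [Fintype V]
    (E : Set (V × V)) (hloop : ∀ x : V, (x, x) ∉ E)
    (Q : V × V → ℝ) (hQ : IsFlow E Q)
    (hacyc : AcyclicRel fun a b => 0 < Q (a, b))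
    (μ₁ μ₂ : V → ℝ) (h₁ : IsProbF μ₁) (h₂ : IsProbF μ₂)
    (hdiv : ∀ x, divergenceF Q x = μ₁ x - μ₂ x) :
    ∃ (γ : ℕ → List V) (q : ℕ → ℝ),
      (∀ n, IsDipath E (γ n)) ∧ (∀ n, (γ n).Nodup) ∧ (∀ n, 0 ≤ q n) ∧ Summable q ∧
      (∀ e, Q e = ∑' n, q n * pathFlow (γ n) e) ∧
      (∀ S : Set V,
        (∑' n, Set.indicator {m : ℕ | ∀ v ∈ γ m, v ∈ S} q n) ≤
          min (∑ x, Set.indicator (S ∩ {x | μ₂ x < μ₁ x}) (fun x => μ₁ x - μ₂ x) x)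
            (∑ x, Set.indicator (S ∩ {x | μ₁ x < μ₂ x}) (fun x => μ₂ x - μ₁ x) x)) ∧
      (∑' n, q n) = (1 / 2) * ∑ x, |μ₁ x - μ₂ x| := by

  classical
  have hVne : Nonempty V := by
    by_contra h
    rw [not_nonempty_iff] at h
    have h1 := h₁.2
    rw [Finset.univ_eq_empty, Finset.sum_empty] at h1
    norm_num at h1
  obtain ⟨v₀⟩ := hVne
  obtain ⟨L, hLp, hLsum, hLhead, hLlast⟩ := decomp E
    ((Finset.univ.filter (fun e : V × V => 0 < Q e)).card
      + (Finset.univ.filter (fun x : V => divergenceF Q x ≠ 0)).card + 1) Q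
    (Nat.lt_succ_self _) hQ hacyc
  set d : List V × ℝ := ([v₀], 0) with hd_def
  set γ : ℕ → List V := fun n => (L.getD n d).1 with hγ_def
  set q : ℕ → ℝ := fun n => (L.getD n d).2 with hq_def
  have hmem : ∀ n, L.getD n d ∈ L ∨ L.getD n d = d := by
    intro n
    by_cases h : n < L.length
    · left
      rw [List.getD_eq_getElem L d h]
      exact List.getElem_mem h
    · right
      exact List.getD_eq_default L d (le_of_not_gt h)
  have hprops : ∀ n, IsDipath E (γ n) ∧ (γ n).Nodup ∧ 0 ≤ q n := by
    intro n
    rcases hmem n with h | h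
    · exact hLp _ h
    · simp only [hγ_def, hq_def, h]; simp only [hd_def]
      exact ⟨⟨List.cons_ne_nil _ _, List.isChain_singleton _⟩, List.nodup_singleton _, le_refl _⟩
  have hγne : ∀ n, γ n ≠ [] := fun n => (hprops n).1.1
  have hqnn : ∀ n, 0 ≤ q n := fun n => (hprops n).2.2
  have hq0 : ∀ n, n ∉ Finset.range L.length → q n = 0 := by
    intro n hn
    simp only [Finset.mem_range, not_lt] at hn
    simp only [hq_def, List.getD_eq_default L d hn]; simp only [hd_def]
  -- conversion between list sums and range sums
  have hconv : ∀ f : List V × ℝ → ℝ,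
      (L.map f).sum = ∑ i ∈ Finset.range L.length, f (L.getD i d) :=
    fun f => list_sum_getD f d L
  -- head and tail aggregate identities
  have hHd : ∀ x, (∑ i ∈ Finset.range L.length,
      if (γ i).head? = some x then q i else 0) = max (μ₁ x - μ₂ x) 0 := by
    intro x
    rw [← hconv (fun p => if p.1.head? = some x then p.2 else 0), hLhead x, hdiv x]
  have hTl : ∀ x, (∑ i ∈ Finset.range L.length,
      if (γ i).getLast? = some x then q i else 0) = max (μ₂ x - μ₁ x) 0 := by
    intro x
    rw [← hconv (fun p => if p.1.getLast? = some x then p.2 else 0), hLlast x, hdiv x]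
    congr 1
    ring
  have habs : ∀ t : ℝ, max t 0 = (t + |t|) / 2 := by
    intro t
    rcases le_or_gt 0 t with h | h
    · rw [max_eq_left h, abs_of_nonneg h]; ring
    · rw [max_eq_right h.le, abs_of_neg h]; ring
  have hsum0 : ∑ x, (μ₁ x - μ₂ x) = 0 := by
    rw [Finset.sum_sub_distrib, h₁.2, h₂.2]; ring
  -- the total mass as a finite sum
  have htsum_q : ∑' n, q n = ∑ i ∈ Finset.range L.length, q i := tsum_eq_sum hq0
  have hmass : ∑ i ∈ Finset.range L.length, q i = (1 / 2) * ∑ x, |μ₁ x - μ₂ x| := by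
    have hrow : ∀ i ∈ Finset.range L.length,
        q i = ∑ x, if (γ i).head? = some x then q i else 0 := by
      intro i _
      have hne := hγne i
      have hhd : (γ i).head? = some ((γ i).head hne) := List.head?_eq_head hne
      rw [Finset.sum_congr rfl (fun x _ => by rw [hhd])]
      have : ∀ x : V, (if some ((γ i).head hne) = some x then q i else 0)
          = if (γ i).head hne = x then q i else 0 := by
        intro x; simp
      rw [Finset.sum_congr rfl (fun x _ => this x), Finset.sum_ite_eq Finset.univ _ _]
      simp
    rw [Finset.sum_congr rfl hrow, Finset.sum_comm]
    rw [Finset.sum_congr rfl (fun x _ => hHd x)]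
    rw [Finset.sum_congr rfl (fun x (_ : x ∈ Finset.univ) => habs (μ₁ x - μ₂ x))]
    rw [← Finset.sum_div, Finset.sum_add_distrib, hsum0]
    ring
  refine ⟨γ, q, fun n => (hprops n).1, fun n => (hprops n).2.1, hqnn,
    summable_of_ne_finset_zero hq0, ?_, ?_, htsum_q.trans hmass⟩
  · intro e
    rw [tsum_eq_sum (s := Finset.range L.length)
      (fun n hn => by rw [hq0 n hn]; ring)]
    rw [hLsum e, hconv (fun p => p.2 * pathFlow p.1 e)]
  · intro S
    have hLHS : (∑' n, Set.indicator {m : ℕ | ∀ v ∈ γ m, v ∈ S} q n)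
        = ∑ i ∈ Finset.range L.length, Set.indicator {m : ℕ | ∀ v ∈ γ m, v ∈ S} q i := by
      refine tsum_eq_sum (fun n hn => ?_)
      rw [Set.indicator_apply]
      split
      · exact hq0 n hn
      · rfl
    rw [hLHS]
    have bound : ∀ (endp : List V → Option V) (agg : V → ℝ),
        (∀ i, ∃ hd, endp (γ i) = some hd ∧ hd ∈ γ i) →
        (∀ x, (∑ i ∈ Finset.range L.length,
            if endp (γ i) = some x then q i else 0) = agg x) →
        (∑ i ∈ Finset.range L.length, Set.indicator {m : ℕ | ∀ v ∈ γ m, v ∈ S} q i)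
          ≤ ∑ x, if x ∈ S then agg x else 0 := by
      intro endp agg hex hagg
      have step : ∀ i ∈ Finset.range L.length,
          Set.indicator {m : ℕ | ∀ v ∈ γ m, v ∈ S} q i
            ≤ ∑ x, if x ∈ S then (if endp (γ i) = some x then q i else 0) else 0 := by
        intro i _
        obtain ⟨hd, hhd, hmemhd⟩ := hex i
        have hrhs : (∑ x, if x ∈ S then (if endp (γ i) = some x then q i else 0) else 0)
            = if hd ∈ S then q i else 0 := by
          rw [Finset.sum_congr rfl (fun x _ => by rw [hhd])]
          have heq : ∀ x : V, (if x ∈ S then (if some hd = some x then q i else 0) else 0)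
              = if hd = x then (if x ∈ S then q i else 0) else 0 := by
            intro x
            by_cases h1 : hd = x <;> by_cases h2 : x ∈ S <;> simp [h1, h2]
          rw [Finset.sum_congr rfl (fun x _ => heq x), Finset.sum_ite_eq Finset.univ _ _]
          simp
        rw [Set.indicator_apply, hrhs]
        by_cases hS : i ∈ {m : ℕ | ∀ v ∈ γ m, v ∈ S}
        · rw [if_pos hS, if_pos (hS hd hmemhd)]
        · rw [if_neg hS]
          split
          · exact hqnn i
          · rfl
      calc (∑ i ∈ Finset.range L.length, Set.indicator {m : ℕ | ∀ v ∈ γ m, v ∈ S} q i)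
          ≤ ∑ i ∈ Finset.range L.length,
              ∑ x, if x ∈ S then (if endp (γ i) = some x then q i else 0) else 0 :=
            Finset.sum_le_sum step
        _ = ∑ x, ∑ i ∈ Finset.range L.length,
              (if x ∈ S then (if endp (γ i) = some x then q i else 0) else 0) :=
            Finset.sum_comm
        _ = ∑ x, if x ∈ S then agg x else 0 := by
            refine Finset.sum_congr rfl (fun x _ => ?_)
            by_cases hS : x ∈ S
            · simp only [if_pos hS]
              exact hagg x
            · simp only [if_neg hS, Finset.sum_const_zero]
    have b1 := bound (fun l => l.head?) (fun x => max (μ₁ x - μ₂ x) 0)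
      (fun i => ⟨(γ i).head (hγne i), List.head?_eq_head (hγne i),
        List.head_mem (hγne i)⟩) hHd
    have b2 := bound (fun l => l.getLast?) (fun x => max (μ₂ x - μ₁ x) 0)
      (fun i => ⟨(γ i).getLast (hγne i), List.getLast?_eq_getLast (hγne i),
        List.getLast_mem (hγne i)⟩) hTl
    have hind1 : ∀ x : V, (if x ∈ S then max (μ₁ x - μ₂ x) 0 else 0)
        = Set.indicator (S ∩ {x | μ₂ x < μ₁ x}) (fun x => μ₁ x - μ₂ x) x := by
      intro x
      rw [Set.indicator_apply]
      by_cases hS : x ∈ S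
      · by_cases hlt : μ₂ x < μ₁ x
        · rw [if_pos hS, if_pos ⟨hS, hlt⟩, max_eq_left (by linarith)]
        · rw [if_pos hS, if_neg (fun h => hlt h.2), max_eq_right (by
            simp only [Set.mem_setOf_eq, not_lt] at hlt
            linarith)]
      · rw [if_neg hS, if_neg (fun h => hS h.1)]
    have hind2 : ∀ x : V, (if x ∈ S then max (μ₂ x - μ₁ x) 0 else 0)
        = Set.indicator (S ∩ {x | μ₁ x < μ₂ x}) (fun x => μ₂ x - μ₁ x) x := by
      intro x
      rw [Set.indicator_apply]
      by_cases hS : x ∈ S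
      · by_cases hlt : μ₁ x < μ₂ x
        · rw [if_pos hS, if_pos ⟨hS, hlt⟩, max_eq_left (by linarith)]
        · rw [if_pos hS, if_neg (fun h => hlt h.2), max_eq_right (by
            simp only [Set.mem_setOf_eq, not_lt] at hlt
            linarith)]
      · rw [if_neg hS, if_neg (fun h => hS h.1)]
    refine le_min ?_ ?_
    · calc _ ≤ _ := b1
        _ = _ := Finset.sum_congr rfl (fun x _ => hind1 x)
    · calc _ ≤ _ := b2
        _ = _ := Finset.sum_congr rfl (fun x _ => hind2 x)
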